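/- Let v₁=(1,0,0), v₂=(0,1,0), v₃=(0,0,1), v₄=(0,-1,-1), v₅=(-1,-1,0), v₆=(1,2,1) in ℝ³. Then the union of the eight cones cone{v₁,v₂,v₄}, cone{v₁,v₂,v₆}, cone{v₁,v₃,v₄}, cone{v₃,v₄,v₅}, cone{v₂,v₃,v₅}, cone{v₂,v₃,v₆}, cone{v₂,v₄,v₅}, cone{v₁,v₃,v₆} equals ℝ³. (The simplicial subdivision Σ₁ of Σ is a complete fan.) -/
import Mathlib


def coneGen (S : Set (Fin 3 → ℝ)) : Set (Fin 3 → ℝ) :=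
  {x | ∃ (n : ℕ) (c : Fin n → ℝ) (v : Fin n → (Fin 3 → ℝ)),
      (∀ i, 0 ≤ c i) ∧ (∀ i, v i ∈ S) ∧ x = ∑ i, c i • v i}

def v1 : Fin 3 → ℝ := ![1, 0, 0]
def v2 : Fin 3 → ℝ := ![0, 1, 0]
def v3 : Fin 3 → ℝ := ![0, 0, 1]
def v4 : Fin 3 → ℝ := ![0, -1, -1]
def v5 : Fin 3 → ℝ := ![-1, -1, 0]
def v6 : Fin 3 → ℝ := ![1, 2, 1]

lemma mem_coneGen_of (S : Set (Fin 3 → ℝ)) (a b c x : Fin 3 → ℝ) (α β γ : ℝ)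
    (ha : a ∈ S) (hb : b ∈ S) (hc : c ∈ S) (hα : 0 ≤ α) (hβ : 0 ≤ β) (hγ : 0 ≤ γ)
    (hx : x = α • a + β • b + γ • c) : x ∈ coneGen S := by
  refine ⟨3, ![α, β, γ], ![a, b, c], ?_, ?_, ?_⟩
  · intro i; fin_cases i <;> assumption
  · intro i; fin_cases i <;> assumption
  · simp [Fin.sum_univ_three, hx]

lemma memC1 (x : Fin 3 → ℝ) (h0 : 0 ≤ x 0) (h2 : x 2 ≤ 0) (h12 : x 2 ≤ x 1) :
    x ∈ coneGen {v1, v2, v4} := by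
  refine mem_coneGen_of _ v1 v2 v4 x (x 0) (x 1 - x 2) (-(x 2))
    (by simp) (by simp) (by simp) h0 (by linarith) (by linarith) ?_
  funext i; fin_cases i <;> simp [v1, v2, v4] <;> ring

lemma memC2 (x : Fin 3 → ℝ) (h2 : 0 ≤ x 2) (h02 : x 2 ≤ x 0) (h12 : 2 * x 2 ≤ x 1) :
    x ∈ coneGen {v1, v2, v6} := by
  refine mem_coneGen_of _ v1 v2 v6 x (x 0 - x 2) (x 1 - 2 * x 2) (x 2)
    (by simp) (by simp) (by simp) (by linarith) (by linarith) h2 ?_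
  funext i; fin_cases i <;> simp [v1, v2, v6] <;> ring

lemma memC3 (x : Fin 3 → ℝ) (h0 : 0 ≤ x 0) (h1 : x 1 ≤ 0) (h12 : x 1 ≤ x 2) :
    x ∈ coneGen {v1, v3, v4} := by
  refine mem_coneGen_of _ v1 v3 v4 x (x 0) (x 2 - x 1) (-(x 1))
    (by simp) (by simp) (by simp) h0 (by linarith) (by linarith) ?_
  funext i; fin_cases i <;> simp [v1, v3, v4] <;> ring

lemma memC4 (x : Fin 3 → ℝ) (h0 : x 0 ≤ 0) (h1 : x 1 ≤ x 0) (h2 : 0 ≤ x 0 - x 1 + x 2) :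
    x ∈ coneGen {v3, v4, v5} := by
  refine mem_coneGen_of _ v3 v4 v5 x (x 0 - x 1 + x 2) (x 0 - x 1) (-(x 0))
    (by simp) (by simp) (by simp) h2 (by linarith) (by linarith) ?_
  funext i; fin_cases i <;> simp [v3, v4, v5] <;> ring

lemma memC5 (x : Fin 3 → ℝ) (h0 : x 0 ≤ 0) (h1 : x 0 ≤ x 1) (h2 : 0 ≤ x 2) :
    x ∈ coneGen {v2, v3, v5} := by
  refine mem_coneGen_of _ v2 v3 v5 x (x 1 - x 0) (x 2) (-(x 0))
    (by simp) (by simp) (by simp) (by linarith) h2 (by linarith) ?_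
  funext i; fin_cases i <;> simp [v2, v3, v5] <;> ring

lemma memC6 (x : Fin 3 → ℝ) (h0 : 0 ≤ x 0) (h1 : 2 * x 0 ≤ x 1) (h2 : x 0 ≤ x 2) :
    x ∈ coneGen {v2, v3, v6} := by
  refine mem_coneGen_of _ v2 v3 v6 x (x 1 - 2 * x 0) (x 2 - x 0) (x 0)
    (by simp) (by simp) (by simp) (by linarith) (by linarith) h0 ?_
  funext i; fin_cases i <;> simp [v2, v3, v6] <;> ring

lemma memC7 (x : Fin 3 → ℝ) (h0 : x 0 ≤ 0) (h2 : x 2 ≤ 0) (h1 : x 0 + x 2 ≤ x 1) :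
    x ∈ coneGen {v2, v4, v5} := by
  refine mem_coneGen_of _ v2 v4 v5 x (x 1 - x 2 - x 0) (-(x 2)) (-(x 0))
    (by simp) (by simp) (by simp) (by linarith) (by linarith) (by linarith) ?_
  funext i; fin_cases i <;> simp [v2, v4, v5] <;> ring

lemma memC8 (x : Fin 3 → ℝ) (h1 : 0 ≤ x 1) (h0 : x 1 ≤ 2 * x 0) (h2 : x 1 ≤ 2 * x 2) :
    x ∈ coneGen {v1, v3, v6} := by
  refine mem_coneGen_of _ v1 v3 v6 x (x 0 - x 1 / 2) (x 2 - x 1 / 2) (x 1 / 2)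
    (by simp) (by simp) (by simp) (by linarith) (by linarith) (by linarith) ?_
  funext i; fin_cases i <;> simp [v1, v3, v6] <;> ring

theorem stmt4 :
    coneGen {v1, v2, v4} ∪ coneGen {v1, v2, v6} ∪ coneGen {v1, v3, v4} ∪
      coneGen {v3, v4, v5} ∪ coneGen {v2, v3, v5} ∪ coneGen {v2, v3, v6} ∪
      coneGen {v2, v4, v5} ∪ coneGen {v1, v3, v6} =
    Set.univ := by
  ext x
  simp only [Set.mem_union, Set.mem_univ, iff_true]
  rcases le_total 0 (x 0) with h0 | h0
  · -- a ≥ 0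
    rcases le_total (x 1) 0 with h1 | h1
    · -- b ≤ 0
      rcases le_total (x 1) (x 2) with h | h
      · have := memC3 x h0 h1 h; tauto
      · have := memC1 x h0 (by linarith) h; tauto
    · -- b ≥ 0
      rcases le_total (x 2) 0 with h2 | h2
      · have := memC1 x h0 h2 (by linarith); tauto
      · rcases le_total (x 2) (x 0) with hac | hac
        · rcases le_total (2 * x 2) (x 1) with hb | hb
          · have := memC2 x h2 hac hb; tauto
          · have := memC8 x h1 (by linarith) (by linarith); tauto
        · rcases le_total (2 * x 0) (x 1) with hb | hb
          · have := memC6 x h0 hb hac; tauto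
          · have := memC8 x h1 (by linarith) (by linarith); tauto
  · -- a ≤ 0
    rcases le_total (x 0) (x 1) with hab | hab
    · rcases le_total 0 (x 2) with h2 | h2
      · have := memC5 x h0 hab h2; tauto
      · have := memC7 x h0 h2 (by linarith); tauto
    · rcases le_total 0 (x 0 - x 1 + x 2) with h4 | h4
      · have := memC4 x h0 hab h4; tauto
      · have := memC7 x h0 (by linarith) (by linarith); tauto
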